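/- Let k ≥ 1, and let Λ₁, …, Λ_k, D₁, …, D_k, K₁, …, K_k, M be symmetric positive definite real n×n matrices. Let y₁, …, y_k : [0,∞) → ℝⁿ be C² curves satisfying Λᵢ·yᵢ'' + Dᵢ·yᵢ' + Kᵢ·yᵢ = F for each i, where F(t) = −M·Σⱼ yⱼ''(t). Then the total storage function S_tot(t) = Σᵢ [½·yᵢ'ᵀΛᵢ·yᵢ' + ½·yᵢᵀKᵢ·yᵢ] + ½·(Σᵢ yᵢ')ᵀM·(Σᵢ yᵢ') satisfies S_tot'(t) ≤ −Σᵢ λ_min(Dᵢ)·‖yᵢ'(t)‖² ≤ 0 for all t ≥ 0. (Dissipation inequality for collaborative grasping by an arbitrary number of AMs, the extension of Theorem 3 described in Section III.D.1 via repeated passivity-preserving feedback interconnection.) -/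

import Mathlib

open Matrix Filter Topology

/-- The minimum eigenvalue of a Hermitian (here: real symmetric) matrix. -/
noncomputable def lamMin {n : ℕ} {D : Matrix (Fin n) (Fin n) ℝ}
    (hD : D.IsHermitian) : ℝ := ⨅ i, hD.eigenvalues i

section Aux

open Matrix

private lemma quad_symm_aux {n : ℕ} {A : Matrix (Fin n) (Fin n) ℝ} (hA : A.IsHermitian)
    (x z : Fin n → ℝ) : x ⬝ᵥ (A *ᵥ z) = z ⬝ᵥ (A *ᵥ x) := by
  have hAt : Aᵀ = A := by
    ext i j
    have := congrFun (congrFun hA i) j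
    simpa [conjTranspose_apply] using this
  rw [dotProduct_mulVec, ← mulVec_transpose, hAt, dotProduct_comm]

private lemma rayleigh_aux {n : ℕ} {D : Matrix (Fin n) (Fin n) ℝ} (hD : D.IsHermitian)
    (x : Fin n → ℝ) :
    lamMin hD * (x ⬝ᵥ x) ≤ x ⬝ᵥ (D *ᵥ x) := by
  classical
  set U : Matrix (Fin n) (Fin n) ℝ := (hD.eigenvectorUnitary : Matrix (Fin n) (Fin n) ℝ) with hU
  set w : Fin n → ℝ := x ᵥ* U with hw
  have hstarU : star U *ᵥ x = w := by
    have : star U = Uᵀ := by ext i j; simp [Matrix.star_apply]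
    rw [this, mulVec_transpose, hw]
  have hDx : x ⬝ᵥ (D *ᵥ x) = ∑ i, hD.eigenvalues i * (w i * w i) := by
    conv_lhs => rw [hD.spectral_theorem, Unitary.conjStarAlgAut_apply]
    rw [dotProduct_mulVec, ← hU, ← vecMul_vecMul, ← vecMul_vecMul, ← hw,
      ← dotProduct_mulVec, hstarU]
    simp [dotProduct, vecMul_diagonal, mul_comm, mul_assoc, mul_left_comm]
  have hxx : x ⬝ᵥ x = ∑ i, w i * w i := by
    have h1 : w ⬝ᵥ w = x ⬝ᵥ x := by
      calc w ⬝ᵥ w = w ⬝ᵥ (star U *ᵥ x) := by rw [hstarU]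
        _ = (w ᵥ* star U) ⬝ᵥ x := dotProduct_mulVec _ _ _
        _ = (x ᵥ* (U * star U)) ⬝ᵥ x := by rw [hw, vecMul_vecMul]
        _ = x ⬝ᵥ x := by
            rw [(mem_unitaryGroup_iff.mp hD.eigenvectorUnitary.2 : U * star U = 1)]
            simp
    simpa [dotProduct] using h1.symm
  rw [hDx, hxx, Finset.mul_sum]
  apply Finset.sum_le_sum
  intro i _
  have h1 : lamMin hD ≤ hD.eigenvalues i :=
    ciInf_le (Set.Finite.bddBelow (Set.finite_range _)) i
  nlinarith [mul_self_nonneg (w i)]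

private lemma quad_hasDerivAt_aux {n : ℕ} (A : Matrix (Fin n) (Fin n) ℝ)
    {f g : ℝ → Fin n → ℝ} {f' g' : Fin n → ℝ} {t : ℝ}
    (hf : HasDerivAt f f' t) (hg : HasDerivAt g g' t) :
    HasDerivAt (fun s => f s ⬝ᵥ (A *ᵥ g s))
      (f' ⬝ᵥ (A *ᵥ g t) + f t ⬝ᵥ (A *ᵥ g')) t := by
  have key : ∀ s, f s ⬝ᵥ (A *ᵥ g s) = ∑ i, ∑ j, f s i * (A i j * g s j) := by
    intro s
    simp [dotProduct, mulVec, Finset.mul_sum]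
  have h2 : HasDerivAt (fun s => ∑ i, ∑ j, f s i * (A i j * g s j))
      (∑ i, ∑ j, (f' i * (A i j * g t j) + f t i * (A i j * g' j))) t := by
    apply HasDerivAt.fun_sum
    intro i _
    apply HasDerivAt.fun_sum
    intro j _
    exact (hasDerivAt_pi.mp hf i).mul ((hasDerivAt_pi.mp hg j).const_mul (A i j))
  have heq : (∑ i, ∑ j, (f' i * (A i j * g t j) + f t i * (A i j * g' j)))
      = f' ⬝ᵥ (A *ᵥ g t) + f t ⬝ᵥ (A *ᵥ g') := by
    simp [dotProduct, mulVec, Finset.mul_sum, Finset.sum_add_distrib]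
  rw [heq] at h2
  exact h2.congr_of_eventuallyEq (Filter.Eventually.of_forall fun s => key s)

end Aux

/-- Dissipation inequality for collaborative grasping by `k` AMs
(Section III.D.1).  With `F = −M Σⱼ yⱼ''`, the total storage function
`S_tot = Σᵢ [½ yᵢ'ᵀ Λᵢ yᵢ' + ½ yᵢᵀ Kᵢ yᵢ] + ½ (Σᵢ yᵢ')ᵀ M (Σᵢ yᵢ')` satisfies
`S_tot'(t) ≤ −Σᵢ λ_min(Dᵢ) ‖yᵢ'(t)‖² ≤ 0` for all `t ≥ 0`. -/
theorem stmt_12 {n k : ℕ} (hk : 1 ≤ k)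
    (Λ D K : Fin k → Matrix (Fin n) (Fin n) ℝ) (M : Matrix (Fin n) (Fin n) ℝ)
    (hΛ : ∀ i, (Λ i).PosDef) (hD : ∀ i, (D i).PosDef) (hK : ∀ i, (K i).PosDef)
    (hM : M.PosDef)
    (y : Fin k → ℝ → Fin n → ℝ) (hy : ∀ i, ContDiff ℝ 2 (y i))
    (F : ℝ → Fin n → ℝ)
    (hF : ∀ t : ℝ, F t = -(M *ᵥ (∑ j, deriv (deriv (y j)) t)))
    (hODE : ∀ i, ∀ t : ℝ, 0 ≤ t →
      Λ i *ᵥ (deriv (deriv (y i)) t) + D i *ᵥ (deriv (y i) t) + K i *ᵥ (y i t) = F t) :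
    ∀ Stot : ℝ → ℝ,
      Stot = (fun t =>
          (∑ i, ((1 / 2) * (deriv (y i) t ⬝ᵥ (Λ i *ᵥ deriv (y i) t))
            + (1 / 2) * (y i t ⬝ᵥ (K i *ᵥ y i t))))
          + (1 / 2) * ((∑ i, deriv (y i) t) ⬝ᵥ (M *ᵥ (∑ i, deriv (y i) t)))) →
      ∀ t : ℝ, 0 ≤ t →
        deriv Stot t
            ≤ -(∑ i, lamMin (hD i).isHermitian * (deriv (y i) t ⬝ᵥ deriv (y i) t)) ∧
        -(∑ i, lamMin (hD i).isHermitian * (deriv (y i) t ⬝ᵥ deriv (y i) t)) ≤ 0 := by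
  intro Stot hS t ht
  -- differentiability facts
  have hy1 : ∀ i, Differentiable ℝ (y i) := fun i =>
    (hy i).differentiable (by norm_num)
  have hy2 : ∀ i, Differentiable ℝ (deriv (y i)) := by
    intro i
    have h2 : ContDiff ℝ (1 + 1 : ℕ) (y i) := by
      have := hy i
      norm_num at this ⊢
      exact this
    exact ((contDiff_succ_iff_deriv (n := 1)).mp (by simpa [one_add_one_eq_two] using h2)).2.2.differentiable (by norm_num)
  -- shorthand
  set v : Fin k → Fin n → ℝ := fun i => deriv (y i) t with hv
  set a : Fin k → Fin n → ℝ := fun i => deriv (deriv (y i)) t with ha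
  have hyd : ∀ i, HasDerivAt (y i) (v i) t := fun i => ((hy1 i) t).hasDerivAt
  have hvd : ∀ i, HasDerivAt (deriv (y i)) (a i) t := fun i => ((hy2 i) t).hasDerivAt
  -- derivative of Stot
  have hsumd : HasDerivAt (fun s => ∑ j, deriv (y j) s) (∑ j, a j) t :=
    HasDerivAt.fun_sum (fun j _ => hvd j)
  have hQ3 : HasDerivAt (fun s => (∑ i, deriv (y i) s) ⬝ᵥ (M *ᵥ (∑ i, deriv (y i) s)))
      ((∑ j, a j) ⬝ᵥ (M *ᵥ (∑ i, v i)) + (∑ i, v i) ⬝ᵥ (M *ᵥ (∑ j, a j))) t := by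
    have := quad_hasDerivAt_aux M hsumd hsumd
    simpa using this
  have hStot : HasDerivAt Stot
      ((∑ i, ((1 / 2) * (a i ⬝ᵥ (Λ i *ᵥ v i) + v i ⬝ᵥ (Λ i *ᵥ a i))
          + (1 / 2) * (v i ⬝ᵥ (K i *ᵥ y i t) + y i t ⬝ᵥ (K i *ᵥ v i))))
        + (1 / 2) * ((∑ j, a j) ⬝ᵥ (M *ᵥ (∑ i, v i)) + (∑ i, v i) ⬝ᵥ (M *ᵥ (∑ j, a j)))) t := by
    rw [hS]
    apply HasDerivAt.add
    · apply HasDerivAt.fun_sum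
      intro i _
      exact ((quad_hasDerivAt_aux (Λ i) (hvd i) (hvd i)).const_mul (1/2)).add
        ((quad_hasDerivAt_aux (K i) (hyd i) (hyd i)).const_mul (1/2))
    · exact hQ3.const_mul (1/2)
  have hderiv : deriv Stot t
      = (∑ i, ((1 / 2) * (a i ⬝ᵥ (Λ i *ᵥ v i) + v i ⬝ᵥ (Λ i *ᵥ a i))
          + (1 / 2) * (v i ⬝ᵥ (K i *ᵥ y i t) + y i t ⬝ᵥ (K i *ᵥ v i))))
        + (1 / 2) * ((∑ j, a j) ⬝ᵥ (M *ᵥ (∑ i, v i)) + (∑ i, v i) ⬝ᵥ (M *ᵥ (∑ j, a j))) :=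
    hStot.deriv
  -- simplify using symmetry and the ODE
  have hEq : deriv Stot t = -(∑ i, v i ⬝ᵥ (D i *ᵥ v i)) := by
    rw [hderiv]
    have hsym1 : ∀ i, a i ⬝ᵥ (Λ i *ᵥ v i) = v i ⬝ᵥ (Λ i *ᵥ a i) := fun i =>
      quad_symm_aux (hΛ i).isHermitian _ _
    have hsym2 : ∀ i, y i t ⬝ᵥ (K i *ᵥ v i) = v i ⬝ᵥ (K i *ᵥ y i t) := fun i =>
      quad_symm_aux (hK i).isHermitian _ _
    have hsym3 : (∑ j, a j) ⬝ᵥ (M *ᵥ (∑ i, v i)) = (∑ i, v i) ⬝ᵥ (M *ᵥ (∑ j, a j)) :=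
      quad_symm_aux hM.isHermitian _ _
    simp only [hsym1, hsym2, hsym3]
    have hterm : ∀ i, v i ⬝ᵥ (Λ i *ᵥ a i) + v i ⬝ᵥ (K i *ᵥ y i t)
        = v i ⬝ᵥ F t - v i ⬝ᵥ (D i *ᵥ v i) := by
      intro i
      have h := congrArg (fun z => v i ⬝ᵥ z) (hODE i t ht)
      simp only [dotProduct_add] at h
      linarith
    have hMF : (∑ i, v i) ⬝ᵥ (M *ᵥ (∑ j, a j)) = -((∑ i, v i) ⬝ᵥ F t) := by
      rw [hF t]
      rw [dotProduct_neg, neg_neg]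
    have hsumF : ∑ i, v i ⬝ᵥ F t = (∑ i, v i) ⬝ᵥ F t := by
      simp [dotProduct, Finset.sum_apply, Finset.sum_mul]
      exact Finset.sum_comm
    calc (∑ i, ((1 / 2) * (v i ⬝ᵥ (Λ i *ᵥ a i) + v i ⬝ᵥ (Λ i *ᵥ a i))
          + (1 / 2) * (v i ⬝ᵥ (K i *ᵥ y i t) + v i ⬝ᵥ (K i *ᵥ y i t))))
        + (1 / 2) * ((∑ i, v i) ⬝ᵥ (M *ᵥ (∑ j, a j)) + (∑ i, v i) ⬝ᵥ (M *ᵥ (∑ j, a j)))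
        = (∑ i, (v i ⬝ᵥ (Λ i *ᵥ a i) + v i ⬝ᵥ (K i *ᵥ y i t)))
          + (∑ i, v i) ⬝ᵥ (M *ᵥ (∑ j, a j)) := by
          congr 1
          · apply Finset.sum_congr rfl; intro i _; ring
          · ring
      _ = (∑ i, (v i ⬝ᵥ F t - v i ⬝ᵥ (D i *ᵥ v i))) - (∑ i, v i) ⬝ᵥ F t := by
          rw [hMF, sub_eq_add_neg]
          congr 1
          exact Finset.sum_congr rfl fun i _ => hterm i
      _ = -(∑ i, v i ⬝ᵥ (D i *ᵥ v i)) := by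
          rw [Finset.sum_sub_distrib, hsumF]
          ring
  refine ⟨?_, ?_⟩
  · rw [hEq]
    apply neg_le_neg
    apply Finset.sum_le_sum
    intro i _
    exact rayleigh_aux (hD i).isHermitian (v i)
  · apply neg_nonpos_of_nonneg
    apply Finset.sum_nonneg
    intro i _
    apply mul_nonneg
    · exact Real.iInf_nonneg fun j => le_of_lt ((hD i).eigenvalues_pos j)
    · simpa [dotProduct] using Finset.sum_nonneg fun j _ => mul_self_nonneg (v i j)
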